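/- For every integer n ≥ 5, the characteristic polynomial of A(K_n,U_1^−) satisfies det(λI − A(K_n,U_1^−)) = (λ+1)^{n−3}(λ−1)(λ² + (4−n)λ + 7 − 3n). -/

import Mathlib

open Matrix

/-- The signed-complete-graph matrix `A(K_n, H^-)`: zero diagonal, `-1` on edges of `H`
(vertices labelled `1, …, n`, index `i : Fin n` corresponds to label `i+1`), `+1` otherwise. -/
noncomputable def signMat (n : ℕ) (E : ℕ → ℕ → Prop) : Matrix (Fin n) (Fin n) ℝ :=
  open scoped Classical in
  Matrix.of fun i j => if i = j then 0 else if E ((i : ℕ) + 1) ((j : ℕ) + 1) then -1 else 1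

/-- The largest eigenvalue of a real matrix (the supremum of its spectrum). -/
noncomputable def lam1 {n : ℕ} (M : Matrix (Fin n) (Fin n) ℝ) : ℝ :=
  sSup (spectrum ℝ M)

/-- `{i, j} = {a, b}` as an (unordered) edge. -/
def adjPair (a b i j : ℕ) : Prop := (i = a ∧ j = b) ∨ (i = b ∧ j = a)

/-- `U₁`: triangle `1 2 3` together with the pendant edges `{1, i}` for `4 ≤ i ≤ n`;
i.e. vertex `1` is adjacent to every other vertex, plus the edge `{2,3}`. -/
def U1edge (i j : ℕ) : Prop :=
  (i = 1 ∧ 2 ≤ j) ∨ (j = 1 ∧ 2 ≤ i) ∨ adjPair 2 3 i j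

/-- `D_{1,n-3}`: edges `{1,2}`, `{2,3}` and `{3,i}` for `4 ≤ i ≤ n`. -/
def Dedge (i j : ℕ) : Prop :=
  adjPair 1 2 i j ∨ adjPair 2 3 i j ∨ (i = 3 ∧ 4 ≤ j) ∨ (j = 3 ∧ 4 ≤ i)

/-- `U₂`: triangles `1 2 3` and `1 4 5` sharing vertex `1`, plus pendant edges `{1,i}`
for `6 ≤ i ≤ n`; i.e. vertex `1` adjacent to all, plus edges `{2,3}` and `{4,5}`. -/
def U2edge (i j : ℕ) : Prop :=
  (i = 1 ∧ 2 ≤ j) ∨ (j = 1 ∧ 2 ≤ i) ∨ adjPair 2 3 i j ∨ adjPair 4 5 i j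

/-- `H₁(s,t)` on `n = s + t + 4` vertices: triangle `1 2 3`, `s` pendant vertices
`5, …, s+4` at vertex `1`, vertex `4` adjacent to `1`, and `t` pendant vertices
`s+5, …, s+t+4` at vertex `4`. -/
def H1edge (s t : ℕ) (i j : ℕ) : Prop :=
  adjPair 1 2 i j ∨ adjPair 1 3 i j ∨ adjPair 2 3 i j ∨ adjPair 1 4 i j ∨
  (i = 1 ∧ 5 ≤ j ∧ j ≤ s + 4) ∨ (j = 1 ∧ 5 ≤ i ∧ i ≤ s + 4) ∨
  (i = 4 ∧ s + 5 ≤ j ∧ j ≤ s + t + 4) ∨ (j = 4 ∧ s + 5 ≤ i ∧ i ≤ s + t + 4)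

/-- `H₂(s,t)` on `n = s + t + 5` vertices: triangle `1 2 3`, edges `{1,4}` and `{4,5}`,
`s` pendant vertices `6, …, s+5` at vertex `4`, and `t` pendant vertices
`s+6, …, s+t+5` at vertex `5`. -/
def H2edge (s t : ℕ) (i j : ℕ) : Prop :=
  adjPair 1 2 i j ∨ adjPair 1 3 i j ∨ adjPair 2 3 i j ∨ adjPair 1 4 i j ∨ adjPair 4 5 i j ∨
  (i = 4 ∧ 6 ≤ j ∧ j ≤ s + 5) ∨ (j = 4 ∧ 6 ≤ i ∧ i ≤ s + 5) ∨
  (i = 5 ∧ s + 6 ≤ j ∧ j ≤ s + t + 5) ∨ (j = 5 ∧ s + 6 ≤ i ∧ i ≤ s + t + 5)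

/-- `K_{1,s} ∪ t·P₂` on `n = s + 1 + 2t` vertices: star with center `1` and leaves
`2, …, s+1`, together with the `t` disjoint edges `{s+2k+2, s+2k+3}`, `0 ≤ k < t`. -/
def starMatchEdge (s t : ℕ) (i j : ℕ) : Prop :=
  (i = 1 ∧ 2 ≤ j ∧ j ≤ s + 1) ∨ (j = 1 ∧ 2 ≤ i ∧ i ≤ s + 1) ∨
  (∃ k, k < t ∧ adjPair (s + 2 * k + 2) (s + 2 * k + 3) i j)

/-- The quotient matrix `Q₃(s,t)`. -/
noncomputable def Q3 (s t : ℕ) : Matrix (Fin 6) (Fin 6) ℝ :=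
  !![0, -1, -1, -1, -(s : ℝ), (t : ℝ);
     -1, 0, -1, 1, (s : ℝ), (t : ℝ);
     -1, -1, 0, 1, (s : ℝ), (t : ℝ);
     -1, 1, 1, 0, (s : ℝ), -(t : ℝ);
     -1, 1, 1, 1, (s : ℝ) - 1, (t : ℝ);
     1, 1, 1, -1, (s : ℝ), (t : ℝ) - 1]

/-- The quotient matrix `Q₄(s,t)`. -/
noncomputable def Q4 (s t : ℕ) : Matrix (Fin 7) (Fin 7) ℝ :=
  !![0, -1, -1, -1, 1, (s : ℝ), (t : ℝ);
     -1, 0, -1, 1, 1, (s : ℝ), (t : ℝ);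
     -1, -1, 0, 1, 1, (s : ℝ), (t : ℝ);
     -1, 1, 1, 0, -1, -(s : ℝ), (t : ℝ);
     1, 1, 1, -1, 0, (s : ℝ), -(t : ℝ);
     1, 1, 1, -1, 1, (s : ℝ) - 1, (t : ℝ);
     1, 1, 1, 1, -1, (s : ℝ), (t : ℝ) - 1]

/-- for `n ≥ 5`,
`det(λI − A(K_n,U₁⁻)) = (λ+1)^{n−3} (λ−1) (λ² + (4−n)λ + 7 − 3n)`. -/
lemma detRowOps {n : ℕ} (M : Matrix (Fin n) (Fin n) ℝ) (r : Fin n)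
    (S : Finset (Fin n)) (hr : r ∉ S) :
    (Matrix.of fun i j => if i ∈ S then M i j - M r j else M i j).det = M.det := by
  classical
  induction S using Finset.induction_on with
  | empty =>
    have h0 : (Matrix.of fun i j => if i ∈ (∅ : Finset (Fin n)) then M i j - M r j else M i j) = M := by
      ext i j; simp
    rw [h0]
  | @insert a S ha ih =>
    have hra : r ≠ a := fun h => hr (h ▸ Finset.mem_insert_self a S)
    have hrS : r ∉ S := fun h => hr (Finset.mem_insert_of_mem h)
    have hstep :
        (Matrix.of fun i j => if i ∈ insert a S then M i j - M r j else M i j)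
          = Matrix.updateRow (Matrix.of fun i j => if i ∈ S then M i j - M r j else M i j) a
              ((Matrix.of fun i j => if i ∈ S then M i j - M r j else M i j) a
                + (-1 : ℝ) • (Matrix.of fun i j => if i ∈ S then M i j - M r j else M i j) r) := by
      ext i j
      by_cases hi : i = a
      · subst hi
        simp [Matrix.updateRow_self, ha, hrS, sub_eq_add_neg]
      · simp [Matrix.updateRow_ne hi, Finset.mem_insert, hi]
    rw [hstep, Matrix.det_updateRow_add_smul_self _ (Ne.symm hra) (-1 : ℝ), ih hrS]

lemma detColOps {n : ℕ} (M : Matrix (Fin n) (Fin n) ℝ) (r : Fin n)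
    (S : Finset (Fin n)) (hr : r ∉ S) :
    (Matrix.of fun i j => if j = r then M i j + ∑ k ∈ S, M i k else M i j).det = M.det := by
  classical
  induction S using Finset.induction_on with
  | empty =>
    have h0 : (Matrix.of fun i j => if j = r then M i j + ∑ k ∈ (∅ : Finset (Fin n)), M i k else M i j) = M := by
      ext i j; by_cases h : j = r <;> simp [h]
    rw [h0]
  | @insert a S ha ih =>
    have hra : r ≠ a := fun h => hr (h ▸ Finset.mem_insert_self a S)
    have hrS : r ∉ S := fun h => hr (Finset.mem_insert_of_mem h)
    have hstep :
        (Matrix.of fun i j => if j = r then M i j + ∑ k ∈ insert a S, M i k else M i j)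
          = Matrix.updateCol (Matrix.of fun i j => if j = r then M i j + ∑ k ∈ S, M i k else M i j) r
              (fun i => (Matrix.of fun i j => if j = r then M i j + ∑ k ∈ S, M i k else M i j) i r
                + (1 : ℝ) • (Matrix.of fun i j => if j = r then M i j + ∑ k ∈ S, M i k else M i j) i a) := by
      ext i j
      by_cases hj : j = r
      · subst hj
        simp [Matrix.updateCol_self, hra.symm, Finset.sum_insert ha]
        ring
      · simp [Matrix.updateCol_ne hj, hj]
    rw [hstep, Matrix.det_updateCol_add_smul_self _ hra (1 : ℝ), ih hrS]

theorem stmt0 (n : ℕ) (hn : 5 ≤ n) (x : ℝ) :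
    (x • (1 : Matrix (Fin n) (Fin n) ℝ) - signMat n U1edge).det =
      (x + 1) ^ (n - 3) * (x - 1) * (x ^ 2 + (4 - (n : ℝ)) * x + 7 - 3 * (n : ℝ)) := by
  classical
  set m := n - 4 with hm
  have hn4 : n = 4 + m := by omega
  set M : Matrix (Fin n) (Fin n) ℝ := x • 1 - signMat n U1edge with hM
  have hMval : ∀ i j : Fin n, M i j =
      if (i : ℕ) = (j : ℕ) then x
      else if ((i : ℕ) = 0 ∨ (j : ℕ) = 0 ∨ ((i : ℕ) = 1 ∧ (j : ℕ) = 2) ∨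
          ((i : ℕ) = 2 ∧ (j : ℕ) = 1)) then 1 else -1 := by
    intro i j
    by_cases h : i = j
    · subst h
      simp [hM, signMat]
    · have hne : (i : ℕ) ≠ (j : ℕ) := fun hc => h (Fin.ext hc)
      have hcond : U1edge ((i : ℕ) + 1) ((j : ℕ) + 1) ↔
          ((i : ℕ) = 0 ∨ (j : ℕ) = 0 ∨ ((i : ℕ) = 1 ∧ (j : ℕ) = 2) ∨
            ((i : ℕ) = 2 ∧ (j : ℕ) = 1)) := by
        simp only [U1edge, adjPair]
        omega
      simp only [hM, Matrix.sub_apply, Matrix.smul_apply, Matrix.one_apply, signMat,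
        Matrix.of_apply, if_neg h, if_neg hne, smul_eq_mul, mul_zero, zero_sub]
      by_cases hc : ((i : ℕ) = 0 ∨ (j : ℕ) = 0 ∨ ((i : ℕ) = 1 ∧ (j : ℕ) = 2) ∨
          ((i : ℕ) = 2 ∧ (j : ℕ) = 1))
      · rw [if_pos (hcond.mpr hc), if_pos hc]; norm_num
      · rw [if_neg (fun hu => hc (hcond.mp hu)), if_neg hc]
  have h3n : (3 : ℕ) < n := by omega
  set r3 : Fin n := ⟨3, h3n⟩ with hr3
  set S : Finset (Fin n) := Finset.univ.filter (fun k : Fin n => 4 ≤ (k : ℕ)) with hS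
  have hmemS : ∀ k : Fin n, k ∈ S ↔ 4 ≤ (k : ℕ) := by
    intro k; simp [hS]
  have hr3S : r3 ∉ S := by
    rw [hmemS]; simp [hr3]
  -- the block equivalence
  set e' : Fin 4 ⊕ Fin m ≃ Fin n := finSumFinEquiv.trans (finCongr hn4.symm) with he'
  have hvl : ∀ a : Fin 4, ((e' (Sum.inl a)) : ℕ) = (a : ℕ) := by
    intro a; simp [he', finCongr_apply]
  have hvr : ∀ b : Fin m, ((e' (Sum.inr b)) : ℕ) = 4 + (b : ℕ) := by
    intro b; simp [he', finCongr_apply]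
  have hSimg : S = Finset.image (fun b : Fin m => e' (Sum.inr b)) Finset.univ := by
    ext k
    rw [hmemS]
    simp only [Finset.mem_image, Finset.mem_univ, true_and]
    constructor
    · intro hk
      have hkm : (k : ℕ) - 4 < m := by omega
      exact ⟨⟨(k : ℕ) - 4, hkm⟩, Fin.ext (by rw [hvr]; simp; omega)⟩
    · rintro ⟨b, rfl⟩
      rw [hvr]; omega
  have hcardS : S.card = m := by
    rw [hSimg, Finset.card_image_of_injective _
        (fun a b hab => Sum.inr_injective (e'.injective hab)),
      Finset.card_univ, Fintype.card_fin]
  set M1 : Matrix (Fin n) (Fin n) ℝ :=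
    Matrix.of fun i j => if i ∈ S then M i j - M r3 j else M i j with hM1
  set M2 : Matrix (Fin n) (Fin n) ℝ :=
    Matrix.of fun i j => if j = r3 then M1 i j + ∑ k ∈ S, M1 i k else M1 i j with hM2
  -- basic entry facts
  have hr3v : ((r3 : Fin n) : ℕ) = 3 := rfl
  have hinlS : ∀ a : Fin 4, e' (Sum.inl a) ∉ S := by
    intro a; rw [hmemS, hvl]; omega
  have hinrS : ∀ b : Fin m, e' (Sum.inr b) ∈ S := by
    intro b; rw [hmemS, hvr]; omega
  have hinrne : ∀ b : Fin m, e' (Sum.inr b) ≠ r3 := by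
    intro b h
    have := congrArg Fin.val h
    rw [hvr, hr3v] at this; omega
  -- sum over S in a top row
  have hsumtop : ∀ a : Fin 4, ∑ k ∈ S, M1 (e' (Sum.inl a)) k
      = (m : ℝ) * (if (a : ℕ) = 0 then 1 else -1) := by
    intro a
    have hconst : ∀ k ∈ S, M1 (e' (Sum.inl a)) k = (if (a : ℕ) = 0 then (1:ℝ) else -1) := by
      intro k hk
      have hk4 : 4 ≤ (k : ℕ) := (hmemS k).mp hk
      rw [hM1, Matrix.of_apply, if_neg (hinlS a), hMval]
      have hne : ¬ ((e' (Sum.inl a) : ℕ) = (k : ℕ)) := by rw [hvl]; omega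
      rw [if_neg hne]
      by_cases ha0 : (a : ℕ) = 0
      · rw [if_pos (by rw [hvl]; omega), if_pos ha0]
      · rw [if_neg (by rw [hvl]; omega), if_neg ha0]
    rw [Finset.sum_congr rfl hconst, Finset.sum_const, hcardS, nsmul_eq_mul]
  -- sum over S in a bottom row
  have hsumbot : ∀ a : Fin m, ∑ k ∈ S, M1 (e' (Sum.inr a)) k = x + 1 := by
    intro a
    rw [Finset.sum_eq_single_of_mem (e' (Sum.inr a)) (hinrS a)]
    · rw [hM1, Matrix.of_apply, if_pos (hinrS a), hMval, hMval, if_pos rfl,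
        if_neg (by rw [hvr, hr3v]; omega), if_neg (by rw [hvr, hr3v]; omega)]
      ring
    · intro k hk hne
      have hk4 : 4 ≤ (k : ℕ) := (hmemS k).mp hk
      have hne' : ¬ ((e' (Sum.inr a) : ℕ) = (k : ℕ)) := fun h => hne (Fin.ext h).symm
      rw [hM1, Matrix.of_apply, if_pos (hinrS a), hMval, hMval, if_neg hne',
        if_neg (by rw [hvr]; omega), if_neg (by rw [hr3v]; omega),
        if_neg (by rw [hr3v]; omega)]
      ring
  -- the block identity
  have hblock : M2.submatrix e' e' =
      Matrix.fromBlocks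
        !![x, 1, 1, (m:ℝ)+1; 1, x, 1, -(m:ℝ)-1; 1, 1, x, -(m:ℝ)-1; 1, -1, -1, x-(m:ℝ)]
        (Matrix.of fun (i : Fin 4) (_ : Fin m) => if (i : ℕ) = 0 then (1:ℝ) else -1)
        0 ((x+1) • (1 : Matrix (Fin m) (Fin m) ℝ)) := by
    ext i j
    rcases i with a | a <;> rcases j with b | b <;>
      simp only [Matrix.submatrix_apply, Matrix.fromBlocks_apply₁₁,
        Matrix.fromBlocks_apply₁₂, Matrix.fromBlocks_apply₂₁, Matrix.fromBlocks_apply₂₂]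
    · -- top-left 4×4 block
      by_cases hb3 : (b : ℕ) = 3
      · have hbeq : e' (Sum.inl b) = r3 := Fin.ext (by rw [hvl, hb3, hr3v])
        rw [hM2, Matrix.of_apply, if_pos hbeq, hbeq, hM1, Matrix.of_apply,
          if_neg (hinlS a), hsumtop, hMval]
        have hb : b = (3 : Fin 4) := Fin.ext hb3
        subst hb
        fin_cases a <;>
          simp only [hvl, hr3v] <;> norm_num <;> ring <;> rfl
      · have hbne : e' (Sum.inl b) ≠ r3 := fun h => hb3 (by rw [← hvl b, h, hr3v])
        rw [hM2, Matrix.of_apply, if_neg hbne, hM1, Matrix.of_apply,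
          if_neg (hinlS a), hMval]
        fin_cases a <;> fin_cases b <;>
          first
            | exact absurd rfl hb3
            | (simp only [hvl]; norm_num)
    · -- top-right block
      rw [hM2, Matrix.of_apply, if_neg (hinrne b), hM1, Matrix.of_apply,
        if_neg (hinlS a), hMval]
      have hne : ¬ ((e' (Sum.inl a) : ℕ) = (e' (Sum.inr b) : ℕ)) := by
        rw [hvl, hvr]; omega
      rw [if_neg hne, Matrix.of_apply]
      by_cases ha0 : (a : ℕ) = 0
      · rw [if_pos (by rw [hvl, hvr]; omega), if_pos ha0]
      · rw [if_neg (by rw [hvl, hvr]; omega), if_neg ha0]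
    · -- bottom-left block
      show M2 (e' (Sum.inr a)) (e' (Sum.inl b)) = 0
      by_cases hb3 : (b : ℕ) = 3
      · have hbeq : e' (Sum.inl b) = r3 := Fin.ext (by rw [hvl, hb3, hr3v])
        rw [hM2, Matrix.of_apply, if_pos hbeq, hbeq, hM1, Matrix.of_apply,
          if_pos (hinrS a), hsumbot, hMval, hMval, if_pos rfl,
          if_neg (by rw [hvr, hr3v]; omega), if_neg (by rw [hvr, hr3v]; omega)]
        ring
      · have hbne : e' (Sum.inl b) ≠ r3 := fun h => hb3 (by rw [← hvl b, h, hr3v])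
        have hb4 : (b : ℕ) < 4 := b.isLt
        rw [hM2, Matrix.of_apply, if_neg hbne, hM1, Matrix.of_apply,
          if_pos (hinrS a), hMval, hMval]
        simp only [hvl, hvr, hr3v]
        split_ifs <;> first
          | ring1
          | (norm_num; done)
          | (exfalso; omega)
          | (exfalso; exact ‹¬True› trivial)
          | (exfalso; rcases ‹_ ∨ _› with h | h | h | h <;>
              first | exact h.elim | omega)
    · -- bottom-right block
      rw [hM2, Matrix.of_apply, if_neg (hinrne b), hM1, Matrix.of_apply,
        if_pos (hinrS a), hMval, hMval]
      simp only [hvl, hvr, hr3v]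
      by_cases hab : a = b
      · subst hab
        simp only [Matrix.smul_apply, Matrix.one_apply_eq, smul_eq_mul]
        split_ifs <;> first
          | ring1
          | (norm_num; done)
          | (exfalso; omega)
          | (exfalso; exact ‹¬True› trivial)
          | (exfalso; rcases ‹_ ∨ _› with h | h | h | h <;>
              first | exact h.elim | omega)
      · have hne : ¬ ((4 : ℕ) + (a : ℕ) = 4 + (b : ℕ)) :=
          fun h => hab (Fin.ext (by omega))
        simp only [Matrix.smul_apply, Matrix.one_apply_ne hab, smul_eq_mul]
        split_ifs <;> first
          | ring1
          | (norm_num; done)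
          | (exfalso; omega)
          | (exfalso; exact ‹¬True› trivial)
          | (exfalso; rcases ‹_ ∨ _› with h | h | h | h <;>
              first | exact h.elim | omega)
  -- put everything together
  have hdet1 : M1.det = M.det := detRowOps M r3 S hr3S
  have hdet2 : M2.det = M1.det := detColOps M1 r3 S hr3S
  have hdet3 : (M2.submatrix e' e').det = M2.det := Matrix.det_submatrix_equiv_self e' M2
  have hMdet : M.det = (M2.submatrix e' e').det := by rw [hdet3, hdet2, hdet1]
  rw [hMdet, hblock, Matrix.det_fromBlocks_zero₂₁]
  have hD : ((x+1) • (1 : Matrix (Fin m) (Fin m) ℝ)).det = (x+1)^m := by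
    simp [Matrix.det_smul]
  have hA4 : (!![x, 1, 1, (m:ℝ)+1; 1, x, 1, -(m:ℝ)-1; 1, 1, x, -(m:ℝ)-1;
      1, -1, -1, x-(m:ℝ)] : Matrix (Fin 4) (Fin 4) ℝ).det
      = (x+1) * ((x - 1) * (x^2 + (4 - ((m:ℝ)+4)) * x + 7 - 3*((m:ℝ)+4))) := by
    simp [Matrix.det_succ_row_zero, Fin.sum_univ_succ, Fin.succAbove,
      show (Fin.castSucc 2 : Fin 4) = 2 from rfl,
      show (Fin.castSucc 1 : Fin 4) = 1 from rfl,
      show (Fin.castSucc 0 : Fin 4) = 0 from rfl]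
    ring
  rw [hD, hA4]
  have hcast : (n : ℝ) = (m : ℝ) + 4 := by rw [hn4]; push_cast; ring
  have hpow : n - 3 = m + 1 := by omega
  rw [hcast, hpow, pow_succ]
  ring
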